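/- Let F be the Faà di Bruno Hopf algebra over ℝ (polynomial algebra on a_2, a_3, ... with the Faà di Bruno coproduct, a_1 = 1). The map sending an algebra character f : F → ℝ to the formal power series f(t) = t + ∑_{n≥2} ⟨f, a_n⟩ t^n/n! is a group anti-isomorphism from the convolution group of characters onto the group (under composition) of formal exponential power series with f_1 = 1: that is, ⟨f * g, a_n⟩ = n![t^n](g ∘ f). -/

import Mathlib

open Finset TensorProduct

/-- Partition-type vectors `λ ∈ ℕ^n` with `∑ i·λ_i = n` and `∑ λ_i = k`. -/
def bellIndex (n k : ℕ) : Finset (Fin n → Fin (n + 1)) :=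
  univ.filter fun l => (∑ i, (i.1 + 1) * (l i).1 = n) ∧ (∑ i, (l i).1 = k)

/-- The coefficient `n! / (λ_1!⋯λ_n! (1!)^{λ_1}⋯(n!)^{λ_n})`. -/
def bellCoeff (n : ℕ) (l : Fin n → Fin (n + 1)) : ℚ :=
  (n.factorial : ℚ) /
    ((∏ i, ((l i).1.factorial * ((i.1 + 1).factorial) ^ (l i).1) : ℕ) : ℚ)

/-- The Faà di Bruno Hopf algebra `ℝ[a_2, a_3, …]` as a polynomial algebra;
the variable `X n` represents the generator `a_n` (only `n ≥ 2` are used). -/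
abbrev FdB : Type := MvPolynomial ℕ ℝ

/-- The generators: `a_1 = 1` and `a_n = X n` for `n ≥ 2` (also `a_0 := 1`, unused). -/
noncomputable def A (n : ℕ) : FdB := if n ≤ 1 then 1 else MvPolynomial.X n

/-- The Faà di Bruno coproduct on the generator `a_n`:
`Δa_n = ∑_{k=1}^n ∑_λ (n!/(λ_1!⋯λ_n!(1!)^{λ_1}⋯(n!)^{λ_n})) a_1^{λ_1}⋯a_n^{λ_n} ⊗ a_k`
with `a_1 = 1`; equivalently `Δa_n = ∑_{k=1}^n B_{n,k}(a_1,…,a_{n+1−k}) ⊗ a_k`. -/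
noncomputable def coprodGen (n : ℕ) : FdB ⊗[ℝ] FdB :=
  ∑ k ∈ Icc 1 n, ∑ l ∈ bellIndex n k,
    ((bellCoeff n l : ℚ) : ℝ) • ((∏ i, A (i.1 + 1) ^ (l i).1) ⊗ₜ[ℝ] A k)

/-- The Faà di Bruno coproduct, as the algebra morphism with `Δ(a_n) = coprodGen n`. -/
noncomputable def Δ : FdB →ₐ[ℝ] FdB ⊗[ℝ] FdB := MvPolynomial.aeval coprodGen

/-- Convolution of two characters, `(f*g)(a) = (m ∘ (f⊗g) ∘ Δ)(a)`. -/
noncomputable def conv (f g : FdB →ₐ[ℝ] ℝ) : FdB →ₗ[ℝ] ℝ :=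
  LinearMap.mul' ℝ ℝ ∘ₗ TensorProduct.map f.toLinearMap g.toLinearMap ∘ₗ Δ.toLinearMap

/-- The exponential power series `t + ∑_{n≥2} ⟨f, a_n⟩ tⁿ/n!` attached to a character `f`. -/
noncomputable def charSeries (f : FdB →ₐ[ℝ] ℝ) : PowerSeries ℝ :=
  PowerSeries.mk fun n => if n = 0 then 0 else f (A n) / (n.factorial : ℝ)

/-- Formal composition `p ∘ q` of power series with zero constant term of `q`. -/
noncomputable def pcomp (p q : PowerSeries ℝ) : PowerSeries ℝ :=
  PowerSeries.mk fun n =>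
    ∑ k ∈ range (n + 1), PowerSeries.coeff k p * PowerSeries.coeff n (q ^ k)

/-! ### Auxiliary development -/

/-- The multiplicative weight of a partition-type finsupp. -/
noncomputable def Tw (x : ℕ → ℝ) (l : ℕ →₀ ℕ) : ℝ :=
  ∏ i ∈ l.support, x i ^ l i / (((l i).factorial * (i.factorial) ^ (l i) : ℕ) : ℝ)

/-- Partition-type finsupps with total weighted size `n` and `k` parts. -/
noncomputable def Pset (n k : ℕ) : Finset (ℕ →₀ ℕ) :=
  (Finset.finsuppAntidiag (Icc 1 n) k).filter fun l => ∑ i ∈ Icc 1 n, i * l i = n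

lemma mem_Pset {n k : ℕ} {l : ℕ →₀ ℕ} :
    l ∈ Pset n k ↔ l 0 = 0 ∧ (l.sum fun _ c => c) = k ∧ (l.sum fun i c => i * c) = n := by
  rw [Pset, mem_filter, mem_finsuppAntidiag]
  constructor
  · rintro ⟨⟨hk, hsupp⟩, hn⟩
    have h0 : l 0 = 0 := by
      by_contra h
      have := hsupp (Finsupp.mem_support_iff.2 h)
      simp at this
    refine ⟨h0, ?_, ?_⟩
    · rw [Finsupp.sum_of_support_subset l hsupp _ (fun _ _ => rfl)]; exact hk
    · rw [Finsupp.sum_of_support_subset l hsupp _ (fun i _ => by simp)]; exact hn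
  · rintro ⟨h0, hk, hn⟩
    have hsupp : l.support ⊆ Icc 1 n := by
      intro i hi
      have hil : l i ≠ 0 := Finsupp.mem_support_iff.1 hi
      have hi1 : 1 ≤ i := by
        rcases Nat.eq_zero_or_pos i with h | h
        · exact absurd (h ▸ h0) hil
        · exact h
      have hle : i * l i ≤ l.sum fun i c => i * c :=
        Finset.single_le_sum (f := fun j => j * l j) (fun j _ => Nat.zero_le _) hi
      have hii : i ≤ i * l i := Nat.le_mul_of_pos_right i (Nat.pos_of_ne_zero hil)
      simp only [mem_Icc]
      exact ⟨hi1, le_trans hii (hn ▸ hle)⟩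
    refine ⟨⟨?_, hsupp⟩, ?_⟩
    · exact (Finsupp.sum_of_support_subset l hsupp (fun _ c => c) (fun _ _ => rfl)).symm.trans hk
    · exact (Finsupp.sum_of_support_subset l hsupp (fun i c => i * c)
        (fun i _ => by simp)).symm.trans hn

lemma Pset_support_subset {n k : ℕ} {l : ℕ →₀ ℕ} (hl : l ∈ Pset n k) :
    l.support ⊆ Icc 1 n := by
  rw [Pset, mem_filter, mem_finsuppAntidiag] at hl
  exact hl.1.2

/-- The Bell-type sum. -/
noncomputable def Sb (x : ℕ → ℝ) (n k : ℕ) : ℝ := ∑ l ∈ Pset n k, Tw x l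

lemma Sb_zero (x : ℕ → ℝ) (n : ℕ) : Sb x n 0 = if n = 0 then 1 else 0 := by
  have hP : ∀ l ∈ Pset n 0, l = 0 := by
    intro l hl
    obtain ⟨-, hk, -⟩ := mem_Pset.1 hl
    ext i
    by_contra h
    have hi : i ∈ l.support := Finsupp.mem_support_iff.2 (by simpa using h)
    have h1 : 0 < l i := Nat.pos_of_ne_zero (Finsupp.mem_support_iff.1 hi)
    have hle : l i ≤ l.sum fun _ c => c :=
      Finset.single_le_sum (f := fun j => l j) (fun j _ => Nat.zero_le _) hi
    omega
  split_ifs with hn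
  · subst hn
    have h1 : Pset 0 0 = {0} :=
      Finset.eq_singleton_iff_unique_mem.2 ⟨mem_Pset.2 (by simp), hP⟩
    rw [Sb, h1, Finset.sum_singleton, Tw]
    simp
  · have h1 : Pset n 0 = ∅ := by
      rw [Finset.eq_empty_iff_forall_notMem]
      intro l hl
      have h2 := hP l hl
      subst h2
      obtain ⟨-, -, hw⟩ := mem_Pset.1 hl
      simp [Finsupp.sum] at hw
      exact hn hw.symm
    rw [Sb, h1, Finset.sum_empty]

lemma fac_ne (c j : ℕ) : ((c.factorial * j.factorial ^ c : ℕ) : ℝ) ≠ 0 := by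
  exact_mod_cast Nat.mul_ne_zero c.factorial_ne_zero (pow_ne_zero _ j.factorial_ne_zero)

lemma Tw_add_single (x : ℕ → ℝ) (l' : ℕ →₀ ℕ) (m : ℕ) :
    ((l' m + 1 : ℕ) : ℝ) * Tw x (l' + Finsupp.single m 1) =
      (x m / (m.factorial : ℝ)) * Tw x l' := by
  classical
  set l : ℕ →₀ ℕ := l' + Finsupp.single m 1 with hl
  have hlm : l m = l' m + 1 := by simp [hl]
  have hli : ∀ i, i ≠ m → l i = l' i := by
    intro i hi; simp [hl, Finsupp.single_apply, Ne.symm hi]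
  have hsupp : l.support = insert m l'.support := by
    ext i
    rcases eq_or_ne i m with rfl | hi
    · simp [Finsupp.mem_support_iff, hlm]
    · simp [Finsupp.mem_support_iff, hli i hi, hi]
  set F : (ℕ →₀ ℕ) → ℕ → ℝ :=
    fun h i => x i ^ h i / (((h i).factorial * (i.factorial) ^ (h i) : ℕ) : ℝ) with hF
  have hTw : ∀ h : ℕ →₀ ℕ, Tw x h = ∏ i ∈ h.support, F h i := fun h => rfl
  by_cases hm : m ∈ l'.support
  · -- m already a part
    have hins : insert m l'.support = l'.support := Finset.insert_eq_self.2 hm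
    have hprodl : Tw x l = F l m * ∏ i ∈ l'.support.erase m, F l i := by
      rw [hTw, hsupp, hins, (Finset.mul_prod_erase _ _ hm).symm]
    have hprodl' : Tw x l' = F l' m * ∏ i ∈ l'.support.erase m, F l' i := by
      rw [hTw, (Finset.mul_prod_erase _ _ hm).symm]
    have herase : ∏ i ∈ l'.support.erase m, F l i = ∏ i ∈ l'.support.erase m, F l' i := by
      refine Finset.prod_congr rfl fun i hi => ?_
      have : i ≠ m := (Finset.mem_erase.1 hi).1
      simp only [hF, hli i this]
    rw [hprodl, hprodl', herase]
    have hkey : ((l' m + 1 : ℕ) : ℝ) * F l m = x m / (m.factorial : ℝ) * F l' m := by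
      simp only [hF, hlm]
      have h1 : (((l' m + 1).factorial * m.factorial ^ (l' m + 1) : ℕ) : ℝ)
          = ((l' m + 1 : ℕ) : ℝ) * (((l' m).factorial * m.factorial ^ (l' m) : ℕ) : ℝ)
            * (m.factorial : ℝ) := by
        push_cast [Nat.factorial_succ]
        ring
      rw [h1, pow_succ]
      have h2 := fac_ne (l' m) m
      have h3 : ((l' m + 1 : ℕ) : ℝ) ≠ 0 := by positivity
      have h4 : (m.factorial : ℝ) ≠ 0 := by
        exact_mod_cast m.factorial_ne_zero
      field_simp
    rw [← mul_assoc, hkey, mul_assoc]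
  · -- m is a new part
    have hl'm : l' m = 0 := Finsupp.notMem_support_iff.1 hm
    have hprodl : Tw x l = F l m * ∏ i ∈ l'.support, F l i := by
      rw [hTw, hsupp, Finset.prod_insert hm]
    have herase : ∏ i ∈ l'.support, F l i = ∏ i ∈ l'.support, F l' i := by
      refine Finset.prod_congr rfl fun i hi => ?_
      have : i ≠ m := fun h => hm (h ▸ hi)
      simp only [hF, hli i this]
    have hFm : F l m = x m / (m.factorial : ℝ) := by
      simp [hF, hlm, hl'm]
    rw [hprodl, herase, hFm, hl'm, ← hTw]
    norm_num

lemma sum_fs_count (l : ℕ →₀ ℕ) (m : ℕ) :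
    ((l + Finsupp.single m 1).sum fun _ c => c) = (l.sum fun _ c => c) + 1 := by
  rw [Finsupp.sum_add_index' (fun _ => rfl) (fun _ _ _ => rfl),
    Finsupp.sum_single_index rfl]

lemma sum_fs_weight (l : ℕ →₀ ℕ) (m : ℕ) :
    ((l + Finsupp.single m 1).sum fun i c => i * c) = (l.sum fun i c => i * c) + m := by
  rw [Finsupp.sum_add_index' (fun i => mul_zero i) (fun i b c => mul_add i b c),
    Finsupp.sum_single_index (mul_zero m), mul_one]

lemma Sb_rec (x : ℕ → ℝ) (n k : ℕ) :
    ((k : ℝ) + 1) * Sb x n (k + 1) =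
      ∑ m ∈ Icc 1 n, (x m / (m.factorial : ℝ)) * Sb x (n - m) k := by
  classical
  have key : ∑ m ∈ Icc 1 n, ∑ l' ∈ Pset (n - m) k, (x m / (m.factorial : ℝ)) * Tw x l'
      = ∑ l ∈ Pset n (k + 1), ∑ m ∈ l.support, ((l m : ℕ) : ℝ) * Tw x l := by
    rw [Finset.sum_sigma', Finset.sum_sigma']
    refine Finset.sum_nbij' (fun p => ⟨p.2 + Finsupp.single p.1 1, p.1⟩)
      (fun q => ⟨q.2, q.1 - Finsupp.single q.2 1⟩) ?_ ?_ ?_ ?_ ?_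
    · rintro ⟨m, l'⟩ hp
      rw [Finset.mem_sigma] at hp
      dsimp only at hp ⊢
      obtain ⟨hm, hl'⟩ := hp
      rw [mem_Icc] at hm
      obtain ⟨h0, hk, hw⟩ := mem_Pset.1 hl'
      rw [Finset.mem_sigma]
      constructor
      · refine mem_Pset.2 ⟨?_, ?_, ?_⟩
        · have : (Finsupp.single m 1 : ℕ →₀ ℕ) 0 = 0 := by
            rw [Finsupp.single_apply_eq_zero]; omega
          simp [h0, this]
        · rw [sum_fs_count, hk]
        · rw [sum_fs_weight, hw]; omega
      · rw [Finsupp.mem_support_iff]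
        simp
    · rintro ⟨l, m⟩ hq
      rw [Finset.mem_sigma] at hq
      dsimp only at hq ⊢
      obtain ⟨hl, hm⟩ := hq
      obtain ⟨h0, hk, hw⟩ := mem_Pset.1 hl
      have hlm : l m ≠ 0 := Finsupp.mem_support_iff.1 hm
      have hm0 : m ≠ 0 := fun h => hlm (h ▸ h0)
      have hmn : m ≤ n := by
        have hle : m * l m ≤ l.sum fun i c => i * c :=
          Finset.single_le_sum (f := fun j => j * l j) (fun j _ => Nat.zero_le _) hm
        have : m ≤ m * l m := Nat.le_mul_of_pos_right m (Nat.pos_of_ne_zero hlm)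
        omega
      have hsingle : Finsupp.single m 1 ≤ l := Finsupp.single_le_iff.2 (Nat.one_le_iff_ne_zero.2 hlm)
      have hrec : (l - Finsupp.single m 1) + Finsupp.single m 1 = l :=
        tsub_add_cancel_of_le hsingle
      rw [Finset.mem_sigma]
      dsimp only
      constructor
      · rw [mem_Icc]; omega
      · refine mem_Pset.2 ⟨?_, ?_, ?_⟩
        · rw [Finsupp.tsub_apply, h0]
          simp
        · have h5 := sum_fs_count (l - Finsupp.single m 1) m
          rw [hrec, hk] at h5
          omega
        · have h5 := sum_fs_weight (l - Finsupp.single m 1) m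
          rw [hrec, hw] at h5
          omega
    · rintro ⟨m, l'⟩ _
      simp only [add_tsub_cancel_right]
    · rintro ⟨l, m⟩ hq
      rw [Finset.mem_sigma] at hq
      obtain ⟨hl, hm⟩ := hq
      have hlm : l m ≠ 0 := Finsupp.mem_support_iff.1 hm
      have hsingle : Finsupp.single m 1 ≤ l := Finsupp.single_le_iff.2 (Nat.one_le_iff_ne_zero.2 hlm)
      simp only [tsub_add_cancel_of_le hsingle]
    · rintro ⟨m, l'⟩ _
      have := Tw_add_single x l' m
      simp only []
      rw [← this]
      congr 1
      simp
  rw [Sb, Finset.mul_sum]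
  have lhs_eq : ∀ l ∈ Pset n (k + 1),
      ((k : ℝ) + 1) * Tw x l = ∑ m ∈ l.support, ((l m : ℕ) : ℝ) * Tw x l := by
    intro l hl
    obtain ⟨-, hk, -⟩ := mem_Pset.1 hl
    rw [← Finset.sum_mul]
    congr 1
    have : ((∑ m ∈ l.support, l m : ℕ) : ℝ) = ∑ m ∈ l.support, ((l m : ℕ) : ℝ) := by
      push_cast; rfl
    rw [← this]
    rw [Finsupp.sum] at hk
    rw [hk]
    push_cast
    ring
  rw [Finset.sum_congr rfl lhs_eq, ← key]
  refine Finset.sum_congr rfl fun m _ => ?_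
  rw [Sb, Finset.mul_sum]

lemma coeff_pow_eq_Sb (x : ℕ → ℝ) (k : ℕ) : ∀ n : ℕ,
    PowerSeries.coeff n
        ((PowerSeries.mk fun m => if m = 0 then 0 else x m / (m.factorial : ℝ)) ^ k)
      = (k.factorial : ℝ) * Sb x n k := by
  induction k with
  | zero =>
    intro n
    rw [pow_zero, Sb_zero, Nat.factorial_zero, PowerSeries.coeff_one]
    split_ifs <;> simp
  | succ k ih =>
    intro n
    rw [pow_succ', PowerSeries.coeff_mul, Finset.Nat.sum_antidiagonal_eq_sum_range_succ_mk]
    have hrange : Finset.range (n + 1) = insert 0 (Icc 1 n) := by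
      ext i; simp [Nat.lt_succ_iff]; omega
    rw [hrange, Finset.sum_insert (by simp)]
    simp only [PowerSeries.coeff_mk, eq_self_iff_true, if_true, zero_mul, zero_add]
    have hsum : ∀ m ∈ Icc 1 n,
        (if m = 0 then (0:ℝ) else x m / (m.factorial : ℝ)) *
            PowerSeries.coeff (n - m)
              ((PowerSeries.mk fun m => if m = 0 then 0 else x m / (m.factorial : ℝ)) ^ k)
          = (x m / (m.factorial : ℝ)) * ((k.factorial : ℝ) * Sb x (n - m) k) := by
      intro m hm
      rw [mem_Icc] at hm
      rw [if_neg (by omega), ih (n - m)]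
    rw [Finset.sum_congr rfl hsum]
    have := Sb_rec x n k
    calc ∑ m ∈ Icc 1 n, (x m / (m.factorial : ℝ)) * ((k.factorial : ℝ) * Sb x (n - m) k)
        = (k.factorial : ℝ) * ∑ m ∈ Icc 1 n, (x m / (m.factorial : ℝ)) * Sb x (n - m) k := by
          rw [Finset.mul_sum]; refine Finset.sum_congr rfl fun m _ => by ring
      _ = (k.factorial : ℝ) * (((k : ℝ) + 1) * Sb x n (k + 1)) := by rw [← this]
      _ = ((k + 1).factorial : ℝ) * Sb x n (k + 1) := by
          rw [Nat.factorial_succ]; push_cast; ring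

lemma sum_Icc_one {M : Type*} [AddCommMonoid M] (n : ℕ) (F : ℕ → M) :
    ∑ j ∈ Icc 1 n, F j = ∑ i : Fin n, F (i.1 + 1) := by
  rw [← Finset.Ico_add_one_right_eq_Icc, Finset.sum_Ico_eq_sum_range,
    Fin.sum_univ_eq_sum_range (fun i => F (i + 1)) n]
  simp [Nat.add_comm]

lemma prod_Icc_one (n : ℕ) (F : ℕ → ℝ) :
    ∏ j ∈ Icc 1 n, F j = ∏ i : Fin n, F (i.1 + 1) := by
  rw [← Finset.Ico_add_one_right_eq_Icc, Finset.prod_Ico_eq_prod_range,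
    Fin.prod_univ_eq_prod_range (fun i => F (i + 1)) n]
  simp [Nat.add_comm]

/-- The finsupp associated to a Bell index vector. -/
noncomputable def lhat {n : ℕ} (l : Fin n → Fin (n + 1)) : ℕ →₀ ℕ :=
  ∑ i : Fin n, Finsupp.single (i.1 + 1) ((l i).1)

lemma lhat_apply_succ {n : ℕ} (l : Fin n → Fin (n + 1)) (i : Fin n) :
    lhat l (i.1 + 1) = (l i).1 := by
  rw [lhat, Finsupp.finset_sum_apply]
  rw [Finset.sum_eq_single i]
  · simp
  · intro t _ ht
    rw [Finsupp.single_apply_eq_zero]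
    intro h
    exact absurd (Fin.ext (by omega)) ht
  · simp

lemma lhat_apply_ne {n : ℕ} (l : Fin n → Fin (n + 1)) (j : ℕ)
    (hj : j = 0 ∨ n < j) : lhat l j = 0 := by
  rw [lhat, Finsupp.finset_sum_apply]
  refine Finset.sum_eq_zero fun t _ => ?_
  rw [Finsupp.single_apply_eq_zero]
  intro h
  exfalso
  have := t.isLt
  omega

lemma lhat_sum {n : ℕ} (l : Fin n → Fin (n + 1)) (f : ℕ → ℕ → ℕ)
    (h0 : ∀ i, f i 0 = 0) (h1 : ∀ i x y, f i (x + y) = f i x + f i y) :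
    (lhat l).sum f = ∑ i : Fin n, f (i.1 + 1) ((l i).1) := by
  rw [lhat, ← Finsupp.sum_finsetSum_index h0 h1]
  exact Finset.sum_congr rfl fun i _ => Finsupp.sum_single_index (h0 _)

lemma mem_bellIndex {n k : ℕ} {l : Fin n → Fin (n + 1)} :
    l ∈ bellIndex n k ↔ (∑ i, (i.1 + 1) * (l i).1 = n) ∧ (∑ i, (l i).1 = k) := by
  rw [bellIndex, Finset.mem_filter]
  simp

lemma bell_sum_eq (x : ℕ → ℝ) (n k : ℕ) :
    ∑ l ∈ bellIndex n k, ((bellCoeff n l : ℚ) : ℝ) * ∏ i, x (i.1 + 1) ^ (l i).1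
      = (n.factorial : ℝ) * Sb x n k := by
  classical
  rw [Sb, Finset.mul_sum]
  refine Finset.sum_nbij' (fun l => lhat l)
    (fun μ => fun i => ⟨min (μ (i.1 + 1)) n, by omega⟩) ?_ ?_ ?_ ?_ ?_
  · intro l hl
    obtain ⟨hw, hk⟩ := mem_bellIndex.1 hl
    refine mem_Pset.2 ⟨lhat_apply_ne l 0 (Or.inl rfl), ?_, ?_⟩
    · rw [lhat_sum l _ (fun _ => rfl) (fun _ _ _ => rfl)]; exact hk
    · rw [lhat_sum l _ (fun i => mul_zero i) (fun i a b => mul_add i a b)]; exact hw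
  · intro μ hμ
    have hsupp := Pset_support_subset hμ
    obtain ⟨h0, hk, hw⟩ := mem_Pset.1 hμ
    have hle : ∀ j, μ j ≤ n := by
      intro j
      rcases Nat.eq_zero_or_pos (μ j) with h | h
      · omega
      · have hj : j ∈ μ.support := Finsupp.mem_support_iff.2 (by omega)
        have h1 : j * μ j ≤ μ.sum fun i c => i * c :=
          Finset.single_le_sum (f := fun i => i * μ i) (fun i _ => Nat.zero_le _) hj
        have hj1 : 1 ≤ j := by
          have := hsupp hj; rw [mem_Icc] at this; exact this.1
        calc μ j ≤ j * μ j := Nat.le_mul_of_pos_left _ hj1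
          _ ≤ n := hw ▸ h1
    have hsum : ∀ f : ℕ → ℕ → ℕ, (∀ i, f i 0 = 0) →
        μ.sum f = ∑ i : Fin n, f (i.1 + 1) (μ (i.1 + 1)) := by
      intro f hf
      rw [Finsupp.sum_of_support_subset μ hsupp f (fun i _ => hf i), sum_Icc_one]
    refine mem_bellIndex.2 ⟨?_, ?_⟩
    · calc ∑ i : Fin n, (i.1 + 1) * (min (μ (i.1 + 1)) n)
          = ∑ i : Fin n, (i.1 + 1) * μ (i.1 + 1) := by
            exact Finset.sum_congr rfl fun i _ => by rw [min_eq_left (hle _)]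
        _ = μ.sum fun i c => i * c := (hsum _ (fun i => mul_zero i)).symm
        _ = n := hw
    · calc ∑ i : Fin n, (min (μ (i.1 + 1)) n)
          = ∑ i : Fin n, μ (i.1 + 1) := by
            exact Finset.sum_congr rfl fun i _ => by rw [min_eq_left (hle _)]
        _ = μ.sum fun _ c => c := (hsum (fun _ c => c) (fun _ => rfl)).symm
        _ = k := hk
  · intro l _
    funext i
    apply Fin.ext
    simp only [lhat_apply_succ]
    exact min_eq_left (by omega)
  · intro μ hμ
    have hsupp := Pset_support_subset hμ
    obtain ⟨h0, hk, hw⟩ := mem_Pset.1 hμ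
    have hle : ∀ j, μ j ≤ n := by
      intro j
      rcases Nat.eq_zero_or_pos (μ j) with h | h
      · omega
      · have hj : j ∈ μ.support := Finsupp.mem_support_iff.2 (by omega)
        have h1 : j * μ j ≤ μ.sum fun i c => i * c :=
          Finset.single_le_sum (f := fun i => i * μ i) (fun i _ => Nat.zero_le _) hj
        have hj1 : 1 ≤ j := by
          have := hsupp hj; rw [mem_Icc] at this; exact this.1
        calc μ j ≤ j * μ j := Nat.le_mul_of_pos_left _ hj1
          _ ≤ n := hw ▸ h1
    ext j
    by_cases hj : 1 ≤ j ∧ j ≤ n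
    · set i : Fin n := ⟨j - 1, by omega⟩ with hi
      have hij : i.1 + 1 = j := by simp [hi]; omega
      rw [← hij, lhat_apply_succ]
      simp [min_eq_left (hle _)]
    · have hμj : μ j = 0 := by
        by_contra h
        have := hsupp (Finsupp.mem_support_iff.2 h)
        rw [mem_Icc] at this
        exact hj this
      rw [lhat_apply_ne _ j (by omega), hμj]
  · intro l hl
    -- term equality
    have happ : ∀ i : Fin n, lhat l (i.1 + 1) = (l i).1 := lhat_apply_succ l
    have hcast : ((bellCoeff n l : ℚ) : ℝ)
        = (n.factorial : ℝ) /
          ((∏ i, ((l i).1.factorial * ((i.1 + 1).factorial) ^ (l i).1) : ℕ) : ℝ) := by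
      rw [bellCoeff]
      push_cast
      ring
    have hterm : ((bellCoeff n l : ℚ) : ℝ) * ∏ i, x (i.1 + 1) ^ (l i).1
        = (n.factorial : ℝ) *
          ∏ i : Fin n, x (i.1 + 1) ^ (l i).1 /
            (((l i).1.factorial * ((i.1 + 1).factorial) ^ (l i).1 : ℕ) : ℝ) := by
      rw [hcast, Finset.prod_div_distrib]
      rw [Nat.cast_prod]
      ring
    rw [hterm]
    congr 1
    -- now identify the product with Tw x (lhat l)
    have hsupp : (lhat l).support ⊆ Icc 1 n := by
      intro j hj
      have hjne : lhat l j ≠ 0 := Finsupp.mem_support_iff.1 hj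
      rw [mem_Icc]
      by_contra h
      push_neg at h
      have : j = 0 ∨ n < j := by omega
      exact hjne (lhat_apply_ne l j this)
    have hTwdef : Tw x (lhat l) = ∏ j ∈ (lhat l).support,
        x j ^ (lhat l) j /
          ((((lhat l) j).factorial * (j.factorial) ^ ((lhat l) j) : ℕ) : ℝ) := rfl
    rw [hTwdef, Finset.prod_subset hsupp (fun j _ hj => by
      have h0 : lhat l j = 0 := Finsupp.notMem_support_iff.1 hj
      simp [h0]), prod_Icc_one]
    exact (Finset.prod_congr rfl fun i _ => by rw [happ i]).symm

/-! ### The Hopf-algebra side -/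

lemma coprodGen_one : coprodGen 1 = (1 : FdB) ⊗ₜ[ℝ] (1 : FdB) := by
  classical
  have hA1 : A 1 = 1 := if_pos le_rfl
  have hbell : bellIndex 1 1 = {fun _ => (1 : Fin 2)} := by decide
  rw [coprodGen]
  rw [show Icc 1 1 = {1} from rfl, Finset.sum_singleton, hbell, Finset.sum_singleton]
  have hco : bellCoeff 1 (fun _ => (1 : Fin 2)) = 1 := by
    rw [bellCoeff]
    norm_num
  rw [hco, hA1]
  norm_num
  rw [hA1]

lemma Delta_A {n : ℕ} (hn : 1 ≤ n) : Δ (A n) = coprodGen n := by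
  rcases eq_or_lt_of_le hn with h | h
  · rw [← h, coprodGen_one]
    have hA1 : A 1 = 1 := if_pos le_rfl
    rw [hA1, map_one, Algebra.TensorProduct.one_def]
  · have hA : A n = MvPolynomial.X n := if_neg (by omega)
    rw [hA, Δ, MvPolynomial.aeval_X]

lemma conv_eq (f g : FdB →ₐ[ℝ] ℝ) {n : ℕ} (hn : 1 ≤ n) :
    conv f g (A n) = ∑ k ∈ Icc 1 n,
      (∑ l ∈ bellIndex n k, ((bellCoeff n l : ℚ) : ℝ) * ∏ i, f (A (i.1 + 1)) ^ (l i).1)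
        * g (A k) := by
  have hΔ : Δ.toLinearMap (A n) = coprodGen n := Delta_A hn
  rw [conv, LinearMap.comp_apply, LinearMap.comp_apply, hΔ, coprodGen, map_sum, map_sum]
  refine Finset.sum_congr rfl fun k _ => ?_
  rw [Finset.sum_mul, map_sum, map_sum]
  refine Finset.sum_congr rfl fun l _ => ?_
  rw [LinearMap.map_smul, LinearMap.map_smul, TensorProduct.map_tmul, LinearMap.mul'_apply]
  simp only [AlgHom.toLinearMap_apply, smul_eq_mul, map_prod, map_pow]
  ring

/-- the map `f ↦ charSeries f` is an anti-isomorphism from the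
convolution group of characters of the Faà di Bruno Hopf algebra onto the group
of exponential power series with `f₁ = 1` under composition:
`⟨f * g, a_n⟩ = n!·[tⁿ]((charSeries g) ∘ (charSeries f))`. -/
theorem character_anti_iso (f g : FdB →ₐ[ℝ] ℝ) (n : ℕ) (hn : 1 ≤ n) :
    conv f g (A n) =
      (n.factorial : ℝ) *
        PowerSeries.coeff n (pcomp (charSeries g) (charSeries f)) := by
  set x : ℕ → ℝ := fun m => f (A m) with hx
  have hcs : charSeries f = PowerSeries.mk fun m => if m = 0 then 0 else x m / (m.factorial : ℝ) :=
    rfl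
  rw [conv_eq f g hn, pcomp, PowerSeries.coeff_mk]
  have hrange : Finset.range (n + 1) = insert 0 (Icc 1 n) := by
    ext i; simp [Nat.lt_succ_iff]; omega
  rw [hrange, Finset.sum_insert (by simp)]
  have h0 : PowerSeries.coeff 0 (charSeries g) = 0 := by
    rw [charSeries, PowerSeries.coeff_mk, if_pos rfl]
  rw [h0, zero_mul, zero_add, Finset.mul_sum]
  refine Finset.sum_congr rfl fun k hk => ?_
  rw [mem_Icc] at hk
  have hg : PowerSeries.coeff k (charSeries g) = g (A k) / (k.factorial : ℝ) := by
    rw [charSeries, PowerSeries.coeff_mk, if_neg (by omega)]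
  have hf : PowerSeries.coeff n (charSeries f ^ k) = (k.factorial : ℝ) * Sb x n k := by
    rw [hcs]; exact coeff_pow_eq_Sb x k n
  rw [hg, hf, bell_sum_eq x n k]
  have hkfac : (k.factorial : ℝ) ≠ 0 := by exact_mod_cast k.factorial_ne_zero
  field_simp
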